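/- (Monotonicity and limiting behavior of the thresholding noise level.) Fix κ ∈ (0,1/2) and J ≥ 1, and define σ_J²(α) = ξ_J(α) / (ξ_J(1 − ακ/(1−κ)) − ξ_J(α)) for α ∈ (0, (1−κ)/κ·(1−κ))∩(0,1). Then σ_J²(α) is finite and strictly positive for each α ∈ (0,1) with 1 − ακ/(1−κ) > α, and σ_J²(α) → 0 as α → 0⁺; moreover, for small α, ξ_J(α) = Θ(α^{2/J}) while ξ_J(1 − ακ/(1−κ)) → ∞, so σ_J²(α) = Θ(α^{2/J} / ξ_J(1 − ακ/(1−κ))) → 0, i.e. achieving smaller distortion with the joint thresholding estimator requires a vanishing effective noise power. -/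

import Mathlib

open MeasureTheory ProbabilityTheory Real Filter Finset Topology
open scoped ENNReal NNReal

noncomputable section

namespace Sparsity

/-- Binary entropy function (natural logarithms). -/
def Hb (p : ℝ) : ℝ := -(p * Real.log p) - (1 - p) * Real.log (1 - p)

/-- The metric entropy rate `R(κ, α)`. -/
def Rrate (κ α : ℝ) : ℝ :=
  if α < 1 - κ then Hb κ - κ * Hb α - (1 - κ) * Hb (κ * α / (1 - κ)) else 0

/-- The standard gaussian measure on `ℝ`. -/
def stdGaussian : Measure ℝ := gaussianReal 0 1

instance : IsProbabilityMeasure stdGaussian := by unfold stdGaussian; infer_instance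

/-- i.i.d. standard gaussian measure on `ι → ℝ`. -/
def gaussianPi (ι : Type*) [Fintype ι] : Measure (ι → ℝ) := Measure.pi fun _ => stdGaussian

instance (ι : Type*) [Fintype ι] : IsProbabilityMeasure (gaussianPi ι) := by
  unfold gaussianPi; infer_instance

/-- CDF of a normalized chi-square with `J` degrees of freedom,
i.e. the law of `(1/J) ∑_{j<J} U_j^2` with `U_j` i.i.d. standard gaussian. -/
def chiCDF (J : ℕ) (t : ℝ) : ℝ :=
  ((gaussianPi (Fin J)) {u | ∑ j, (u j) ^ 2 ≤ J * t}).toReal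

/-- Quantile function `ξ_J` of the normalized chi-square with `J` degrees of freedom. -/
def xi (J : ℕ) (p : ℝ) : ℝ := sInf {t : ℝ | 0 ≤ t ∧ p ≤ chiCDF J t}

/-- The diversity power `P_J(β) = ∫_0^β ξ_J(p) dp`. -/
def Ppow (J : ℕ) (β : ℝ) : ℝ := ∫ p in (0:ℝ)..β, xi J p

/-- All sparsity patterns: size-`k` subsets of `{1,…,n}`. -/
def patterns (n k : ℕ) : Finset (Finset (Fin n)) := Finset.powersetCard k Finset.univ

/-- The underlying randomness for the joint sparsity model: nonzero values `ω.1`,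
measurement matrices `ω.2.1`, and additive noise `ω.2.2`. -/
abbrev Omega (n m J : ℕ) : Type :=
  (Fin J → Fin n → ℝ) × (Fin J → Fin m → Fin n → ℝ) × (Fin J → Fin m → ℝ)

/-- The law of the randomness: everything i.i.d. standard gaussian. -/
def omegaLaw (n m J : ℕ) : Measure (Omega n m J) :=
  (Measure.pi fun _ : Fin J => gaussianPi (Fin n)).prod
    ((Measure.pi fun _ : Fin J => Measure.pi fun _ : Fin m => gaussianPi (Fin n)).prod
      (Measure.pi fun _ : Fin J => gaussianPi (Fin m)))

/-- The sparse signal with pattern `S` and nonzero values `x`. -/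
def signal (n : ℕ) (S : Finset (Fin n)) (x : Fin n → ℝ) : Fin n → ℝ :=
  fun i => if i ∈ S then x i else 0

/-- The noisy observations `Y_j = √(SNR/k)·A_j X_j + W_j`. -/
def Yobs (n m J : ℕ) (SNR : ℝ) (k : ℕ) (S : Finset (Fin n)) (ω : Omega n m J) :
    Fin J → Fin m → ℝ :=
  fun j r =>
    Real.sqrt (SNR / k) * (∑ i, ω.2.1 j r i * signal n S (ω.1 j) i) + ω.2.2 j r

/-- Normalized distortion `d(S,T) = max(|S∖T|, |T∖S|)/k`. -/
def distor (k : ℕ) {n : ℕ} (S T : Finset (Fin n)) : ℝ :=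
  (max (S \ T).card (T \ S).card : ℝ) / k

/-- A sparsity pattern estimator: a function of the observations `(Y_j)_j`
and of the measurement matrices `(A_j)_j`. -/
abbrev Estimator (n m J : ℕ) : Type :=
  (Fin J → Fin m → ℝ) → (Fin J → Fin m → Fin n → ℝ) → Finset (Fin n)

/-- The probability that the estimator `est` makes distortion larger than `α`,
averaged over the uniformly distributed sparsity pattern. -/
def errProb (n m J k : ℕ) (SNR α : ℝ) (est : Estimator n m J) : ℝ :=
  (n.choose k : ℝ)⁻¹ * ∑ S ∈ patterns n k,
    (omegaLaw n m J
      {ω | α < distor k S (est (Yobs n m J SNR k S ω) ω.2.1)}).toReal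

/-- Distortion `α` is achievable (by some estimator sequence) at sparsity rate `κ`,
signal-to-noise ratio `SNR`, total sampling rate `ρ` and diversity `J`. -/
def achievable (κ SNR ρ : ℝ) (J : ℕ) (α : ℝ) : Prop :=
  ∃ (k m : ℕ → ℕ) (est : ∀ n, Estimator n (m n) J),
    Tendsto (fun n => (k n : ℝ) / n) atTop (𝓝 κ) ∧
    Tendsto (fun n => (J : ℝ) * (m n) / n) atTop (𝓝 ρ) ∧
    Tendsto (fun n => errProb n (m n) J (k n) SNR α (est n)) atTop (𝓝 0)

/-- The infimum total sampling rate at which distortion `α` is achievable. -/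
def rhoStar (κ SNR : ℝ) (J : ℕ) (α : ℝ) : ℝ := sInf {ρ | achievable κ SNR ρ J α}

end Sparsity

namespace Sparsity

/-- The critical noise power `σ_J²(α) = ξ_J(α)/(ξ_J(1 − ακ/(1−κ)) − ξ_J(α))`. -/
def sigmaSqCrit (J : ℕ) (κ α : ℝ) : ℝ :=
  xi J α / (xi J (1 - α * κ / (1 - κ)) - xi J α)

lemma stdG_apply (s : Set ℝ) :
    stdGaussian s = ∫⁻ x in s, ENNReal.ofReal ((Real.sqrt (2*π))⁻¹ * Real.exp (-(x^2)/2)) := by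
  rw [stdGaussian, gaussianReal_apply 0 one_ne_zero s]
  congr 1
  ext x
  simp [gaussianPDF, gaussianPDFReal]

lemma stdG_upper {b : ℝ} (hb : 0 ≤ b) :
    stdGaussian (Set.Icc (-b) b) ≤ ENNReal.ofReal (2 * b * (Real.sqrt (2*π))⁻¹) := by
  rw [stdG_apply]
  calc ∫⁻ x in Set.Icc (-b) b, ENNReal.ofReal ((Real.sqrt (2*π))⁻¹ * Real.exp (-(x^2)/2))
      ≤ ∫⁻ _ in Set.Icc (-b) b, ENNReal.ofReal ((Real.sqrt (2*π))⁻¹) := by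
        refine lintegral_mono fun x => ?_
        refine ENNReal.ofReal_le_ofReal ?_
        have h1 : Real.exp (-(x^2)/2) ≤ 1 := by
          rw [← Real.exp_zero]
          apply Real.exp_le_exp.2
          nlinarith [sq_nonneg x]
        nlinarith [inv_nonneg.2 (Real.sqrt_nonneg (2*π))]
    _ = ENNReal.ofReal ((Real.sqrt (2*π))⁻¹) * volume (Set.Icc (-b) b) := by
        rw [setLIntegral_const]
    _ ≤ ENNReal.ofReal (2 * b * (Real.sqrt (2*π))⁻¹) := by
        rw [Real.volume_Icc, ← ENNReal.ofReal_mul (by positivity)]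
        apply ENNReal.ofReal_le_ofReal
        nlinarith [inv_nonneg.2 (Real.sqrt_nonneg (2*π))]

lemma stdG_lower_Icc {b : ℝ} (hb : 0 ≤ b) :
    ENNReal.ofReal (2 * b * (Real.sqrt (2*π))⁻¹ * Real.exp (-(b^2)/2))
      ≤ stdGaussian (Set.Icc (-b) b) := by
  rw [stdG_apply]
  calc ENNReal.ofReal (2 * b * (Real.sqrt (2*π))⁻¹ * Real.exp (-(b^2)/2))
      = ENNReal.ofReal ((Real.sqrt (2*π))⁻¹ * Real.exp (-(b^2)/2)) * volume (Set.Icc (-b) b) := by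
        rw [Real.volume_Icc, ← ENNReal.ofReal_mul (by positivity)]
        ring_nf
    _ = ∫⁻ _ in Set.Icc (-b) b, ENNReal.ofReal ((Real.sqrt (2*π))⁻¹ * Real.exp (-(b^2)/2)) := by
        rw [setLIntegral_const]
    _ ≤ ∫⁻ x in Set.Icc (-b) b, ENNReal.ofReal ((Real.sqrt (2*π))⁻¹ * Real.exp (-(x^2)/2)) := by
        refine setLIntegral_mono (by fun_prop) fun x hx => ?_
        refine ENNReal.ofReal_le_ofReal ?_
        have hx2 : x^2 ≤ b^2 := by
          rcases hx with ⟨h1, h2⟩; nlinarith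
        have := Real.exp_le_exp.2 (by linarith : -(b^2)/2 ≤ -(x^2)/2)
        nlinarith [inv_nonneg.2 (Real.sqrt_nonneg (2*π)), Real.exp_pos (-(b^2)/2)]

lemma stdG_Ioo_pos {a b : ℝ} (h : a < b) : 0 < stdGaussian (Set.Ioo a b) := by
  have hM : ∀ x ∈ Set.Ioo a b, x^2 ≤ max (a^2) (b^2) := by
    intro x hx
    rcases le_or_gt x 0 with h0 | h0
    · exact le_max_of_le_left (by nlinarith [hx.1])
    · exact le_max_of_le_right (by nlinarith [hx.2])
  set M := max (a^2) (b^2) with hMdef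
  rw [stdG_apply]
  calc (0:ℝ≥0∞) < ENNReal.ofReal ((Real.sqrt (2*π))⁻¹ * Real.exp (-M/2)) * volume (Set.Ioo a b) := by
        rw [Real.volume_Ioo]
        apply ENNReal.mul_pos
        · simp only [ne_eq, ENNReal.ofReal_eq_zero, not_le]
          positivity
        · simp only [ne_eq, ENNReal.ofReal_eq_zero, not_le]
          linarith
    _ = ∫⁻ _ in Set.Ioo a b, ENNReal.ofReal ((Real.sqrt (2*π))⁻¹ * Real.exp (-M/2)) := by
        rw [setLIntegral_const]
    _ ≤ ∫⁻ x in Set.Ioo a b, ENNReal.ofReal ((Real.sqrt (2*π))⁻¹ * Real.exp (-(x^2)/2)) := by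
        refine setLIntegral_mono (by fun_prop) fun x hx => ?_
        refine ENNReal.ofReal_le_ofReal ?_
        have := Real.exp_le_exp.2 (by linarith [hM x hx] : -M/2 ≤ -(x^2)/2)
        nlinarith [inv_nonneg.2 (Real.sqrt_nonneg (2*π)), Real.exp_pos (-M/2)]


lemma gaussianPi_pi (J : ℕ) (s : Set ℝ) (hs : MeasurableSet s) :
    gaussianPi (Fin J) (Set.univ.pi fun _ => s) = stdGaussian s ^ J := by
  rw [gaussianPi, Measure.pi_pi]
  simp

lemma sq_le_set {s : ℝ} (hs : 0 ≤ s) :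
    {x : ℝ | x^2 ≤ s} = Set.Icc (-(Real.sqrt s)) (Real.sqrt s) := by
  ext x
  simp only [Set.mem_setOf_eq, Set.mem_Icc, ← abs_le, ← Real.sqrt_sq_eq_abs]
  exact (Real.sqrt_le_sqrt_iff hs).symm

lemma chiSet_measurable (J : ℕ) (c : ℝ) : MeasurableSet {u : Fin J → ℝ | ∑ j, (u j)^2 ≤ c} := by
  apply measurableSet_le (by fun_prop) measurable_const

lemma chiCDF_nonneg (J : ℕ) (t : ℝ) : 0 ≤ chiCDF J t := ENNReal.toReal_nonneg

lemma chiCDF_mono (J : ℕ) {s t : ℝ} (h : s ≤ t) : chiCDF J s ≤ chiCDF J t := by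
  apply ENNReal.toReal_mono (measure_ne_top _ _)
  apply measure_mono
  intro u hu
  exact le_trans hu (mul_le_mul_of_nonneg_left h (Nat.cast_nonneg J))

lemma le_chiCDF_iff {J : ℕ} {p t : ℝ} :
    p ≤ chiCDF J t ↔ ENNReal.ofReal p ≤ gaussianPi (Fin J) {u | ∑ j, (u j)^2 ≤ J * t} := by
  rw [chiCDF]
  exact (ENNReal.ofReal_le_iff_le_toReal (measure_ne_top _ _)).symm

lemma chiCDF_upper (J : ℕ) {t : ℝ} (ht : 0 ≤ t) :
    chiCDF J t ≤ (2 * Real.sqrt ((J:ℝ) * t) * (Real.sqrt (2*π))⁻¹)^J := by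
  have hJt : (0:ℝ) ≤ (J:ℝ) * t := by positivity
  set r := 2 * Real.sqrt ((J:ℝ) * t) * (Real.sqrt (2*π))⁻¹ with hr
  have hr0 : 0 ≤ r := by positivity
  have hsub : {u : Fin J → ℝ | ∑ j, (u j)^2 ≤ (J:ℝ) * t}
      ⊆ Set.univ.pi fun _ => {x : ℝ | x^2 ≤ (J:ℝ) * t} := by
    intro u hu j _
    have h1 : (u j)^2 ≤ ∑ i, (u i)^2 :=
      Finset.single_le_sum (fun i _ => sq_nonneg (u i)) (Finset.mem_univ j)
    exact le_trans h1 hu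
  have h2 := measure_mono (μ := gaussianPi (Fin J)) hsub
  rw [gaussianPi_pi _ _ (by rw [sq_le_set hJt]; exact measurableSet_Icc)] at h2
  have h3 : stdGaussian {x : ℝ | x^2 ≤ (J:ℝ)*t} ≤ ENNReal.ofReal r := by
    rw [sq_le_set hJt]; exact stdG_upper (Real.sqrt_nonneg _)
  have h4 : gaussianPi (Fin J) {u : Fin J → ℝ | ∑ j, (u j)^2 ≤ (J:ℝ) * t}
      ≤ ENNReal.ofReal (r ^ J) := by
    rw [ENNReal.ofReal_pow hr0]
    exact le_trans h2 (pow_le_pow_left' h3 J)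
  exact ENNReal.toReal_le_of_le_ofReal (by positivity) h4

lemma chiCDF_lower (J : ℕ) {t : ℝ} (ht : 0 ≤ t) :
    (2 * Real.sqrt t * (Real.sqrt (2*π))⁻¹ * Real.exp (-t/2))^J ≤ chiCDF J t := by
  set r := 2 * Real.sqrt t * (Real.sqrt (2*π))⁻¹ * Real.exp (-t/2) with hr
  have hr0 : 0 ≤ r := by positivity
  have hsub : (Set.univ.pi fun _ : Fin J => {x : ℝ | x^2 ≤ t})
      ⊆ {u : Fin J → ℝ | ∑ j, (u j)^2 ≤ (J:ℝ) * t} := by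
    intro u hu
    have : ∑ j, (u j)^2 ≤ ∑ _j : Fin J, t :=
      Finset.sum_le_sum fun j _ => hu j (Set.mem_univ j)
    simpa using this
  have h2 := measure_mono (μ := gaussianPi (Fin J)) hsub
  rw [gaussianPi_pi _ _ (by rw [sq_le_set ht]; exact measurableSet_Icc)] at h2
  have h3 : ENNReal.ofReal r ≤ stdGaussian {x : ℝ | x^2 ≤ t} := by
    rw [sq_le_set ht]
    have := stdG_lower_Icc (Real.sqrt_nonneg t)
    rwa [Real.sq_sqrt ht] at this
  rw [le_chiCDF_iff]
  calc ENNReal.ofReal (r ^ J) = (ENNReal.ofReal r)^J := ENNReal.ofReal_pow hr0 _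
    _ ≤ stdGaussian {x : ℝ | x^2 ≤ t} ^ J := pow_le_pow_left' h3 J
    _ ≤ _ := h2

lemma chiCDF_le_one (J : ℕ) (t : ℝ) : chiCDF J t ≤ 1 := by
  rw [chiCDF]
  exact ENNReal.toReal_le_of_le_ofReal zero_le_one (by simpa using prob_le_one)

lemma chiCDF_zero {J : ℕ} (hJ : 1 ≤ J) : chiCDF J 0 = 0 := by
  have h := chiCDF_upper J (le_refl 0)
  have : (2 * Real.sqrt ((J:ℝ) * 0) * (Real.sqrt (2*π))⁻¹)^J = 0 := by
    simp [zero_pow (by omega : J ≠ 0)]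
  exact le_antisymm (by rw [this] at h; exact h) (chiCDF_nonneg J 0)

lemma chiCDF_lt_one {J : ℕ} (hJ : 1 ≤ J) (t : ℝ) : chiCDF J t < 1 := by
  rcases lt_or_ge t 0 with ht | ht
  · have : {u : Fin J → ℝ | ∑ j, (u j)^2 ≤ (J:ℝ) * t} = ∅ := by
      ext u
      simp only [Set.mem_setOf_eq, Set.mem_empty_iff_false, iff_false, not_le]
      have : (J:ℝ) * t < 0 := mul_neg_of_pos_of_neg (by exact_mod_cast hJ) ht
      exact lt_of_lt_of_le this (Finset.sum_nonneg fun j _ => sq_nonneg _)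
    rw [chiCDF, this]
    simp
  · set a := Real.sqrt ((J:ℝ)*t) with ha
    have ha0 : 0 ≤ a := Real.sqrt_nonneg _
    set S := {u : Fin J → ℝ | ∑ j, (u j)^2 ≤ (J:ℝ) * t} with hS
    have hsub : (Set.univ.pi fun _ : Fin J => Set.Ioi a) ⊆ Sᶜ := by
      intro u hu
      simp only [Set.mem_compl_iff, hS, Set.mem_setOf_eq, not_le]
      have key : ∀ j : Fin J, a^2 < (u j)^2 := by
        intro j
        have := hu j (Set.mem_univ j)
        have h1 : a < u j := this
        nlinarith
      have h2 : a^2 < (u ⟨0, by omega⟩)^2 := key _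
      have h3 : (u ⟨0, by omega⟩)^2 ≤ ∑ j, (u j)^2 :=
        Finset.single_le_sum (fun i _ => sq_nonneg (u i)) (Finset.mem_univ _)
      have h4 : a^2 = (J:ℝ)*t := Real.sq_sqrt (by positivity)
      linarith
    have hpos : 0 < gaussianPi (Fin J) Sᶜ := by
      refine lt_of_lt_of_le ?_ (measure_mono hsub)
      rw [gaussianPi_pi _ _ measurableSet_Ioi]
      have h5 : 0 < stdGaussian (Set.Ioi a) :=
        lt_of_lt_of_le (stdG_Ioo_pos (by linarith : a < a + 1))
          (measure_mono Set.Ioo_subset_Ioi_self)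
      positivity
    have hmeas : MeasurableSet S := chiSet_measurable J _
    have hsum : gaussianPi (Fin J) S + gaussianPi (Fin J) Sᶜ = 1 := by
      rw [measure_add_measure_compl hmeas]
      simp
    have hlt : gaussianPi (Fin J) S < 1 := by
      by_contra hcon
      push_neg at hcon
      have hle : gaussianPi (Fin J) S ≤ 1 := prob_le_one
      have heq : gaussianPi (Fin J) S = 1 := le_antisymm hle hcon
      rw [heq] at hsum
      have : gaussianPi (Fin J) Sᶜ = 0 := by
        have h1 : (1:ℝ≥0∞) + gaussianPi (Fin J) Sᶜ = 1 + 0 := by simpa using hsum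
        exact (ENNReal.add_right_inj (by norm_num)).mp h1
      rw [this] at hpos; exact lt_irrefl _ hpos
    rw [chiCDF]
    rw [show (1:ℝ) = (1:ℝ≥0∞).toReal by simp]
    exact ENNReal.toReal_strict_mono (by norm_num) hlt

lemma exists_chiCDF_ge {J : ℕ} (hJ : 1 ≤ J) {p : ℝ} (hp : p < 1) :
    ∃ n : ℕ, p ≤ chiCDF J n := by
  rcases le_or_gt p 0 with hp0 | hp0
  · exact ⟨0, le_trans hp0 (chiCDF_nonneg J _)⟩
  set s : ℕ → Set (Fin J → ℝ) := fun n => {u | ∑ j, (u j)^2 ≤ (J:ℝ) * n} with hs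
  have hmono : Monotone s := by
    intro n m hnm u hu
    simp only [hs, Set.mem_setOf_eq] at hu ⊢
    have h1 : (n:ℝ) ≤ m := by exact_mod_cast hnm
    have h2 : (J:ℝ) * n ≤ (J:ℝ) * m := by
      have : (0:ℝ) ≤ J := Nat.cast_nonneg J
      nlinarith
    linarith
  have hunion : (⋃ n, s n) = Set.univ := by
    ext u
    simp only [Set.mem_iUnion, Set.mem_univ, iff_true, hs, Set.mem_setOf_eq]
    refine ⟨⌈∑ j, (u j)^2⌉₊, ?_⟩
    calc ∑ j, (u j)^2 ≤ (⌈∑ j, (u j)^2⌉₊ : ℝ) := Nat.le_ceil _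
      _ ≤ (J:ℝ) * ⌈∑ j, (u j)^2⌉₊ := by
          nlinarith [Nat.cast_nonneg (α := ℝ) ⌈∑ j, (u j)^2⌉₊, (by exact_mod_cast hJ : (1:ℝ) ≤ J)]
  have htend := tendsto_measure_iUnion_atTop (μ := gaussianPi (Fin J)) hmono
  rw [hunion] at htend
  have huniv : gaussianPi (Fin J) Set.univ = 1 := measure_univ
  rw [huniv] at htend
  have hlt : ENNReal.ofReal p < 1 := by
    rw [← ENNReal.ofReal_one]
    exact ENNReal.ofReal_lt_ofReal_iff (by norm_num) |>.mpr hp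
  have hev : ∀ᶠ n : ℕ in atTop, ENNReal.ofReal p < gaussianPi (Fin J) (s n) :=
    htend.eventually (eventually_gt_nhds hlt)
  obtain ⟨n, hn⟩ := hev.exists
  exact ⟨n, le_chiCDF_iff.mpr hn.le⟩

lemma sphere_null {J : ℕ} (hJ : 1 ≤ J) (c : ℝ) :
    gaussianPi (Fin J) {u | ∑ j, (u j)^2 = c} = 0 := by
  obtain ⟨m, rfl⟩ : ∃ m, J = m + 1 := ⟨J - 1, by omega⟩
  set e := MeasurableEquiv.piFinSuccAbove (fun _ : Fin (m+1) => ℝ) 0 with he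
  have hmp := measurePreserving_piFinSuccAbove (fun _ : Fin (m+1) => stdGaussian) 0
  set S : Set (Fin (m+1) → ℝ) := {u | ∑ j, (u j)^2 = c} with hSdef
  have hS : MeasurableSet S := measurableSet_eq_fun (by fun_prop) measurable_const
  have hT : MeasurableSet (e.symm ⁻¹' S) := e.symm.measurable hS
  have key : gaussianPi (Fin (m+1)) S
      = (stdGaussian.prod (Measure.pi fun _ : Fin m => stdGaussian)) (e.symm ⁻¹' S) := by
    have h1 : gaussianPi (Fin (m+1)) (e ⁻¹' (e.symm ⁻¹' S))
        = (stdGaussian.prod (Measure.pi fun _ : Fin m => stdGaussian)) (e.symm ⁻¹' S) :=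
      hmp.measure_preimage hT.nullMeasurableSet
    have h2 : e ⁻¹' (e.symm ⁻¹' S) = S := by
      ext u; simp
    rwa [h2] at h1
  rw [key, Measure.prod_apply_symm hT]
  have hslice : ∀ y : Fin m → ℝ,
      stdGaussian ((fun x => (x, y)) ⁻¹' (e.symm ⁻¹' S)) = 0 := by
    intro y
    have hset : ((fun x => (x, y)) ⁻¹' (e.symm ⁻¹' S))
        ⊆ {Real.sqrt (c - ∑ j, (y j)^2), -Real.sqrt (c - ∑ j, (y j)^2)} := by
      intro x hx
      simp only [Set.mem_preimage, hSdef, Set.mem_setOf_eq, he] at hx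
      have hx2 : x^2 + ∑ j, (y j)^2 = c := by
        rw [Fin.sum_univ_succAbove (fun j => ((e.symm (x, y)) j)^2) 0] at hx
        simpa [he, MeasurableEquiv.piFinSuccAbove, Fin.insertNthEquiv] using hx
      have hx3 : x^2 = c - ∑ j, (y j)^2 := by linarith
      have : x = Real.sqrt (c - ∑ j, (y j)^2) ∨ x = -Real.sqrt (c - ∑ j, (y j)^2) := by
        have h4 : Real.sqrt (c - ∑ j, (y j)^2) = |x| := by
          rw [← hx3, Real.sqrt_sq_eq_abs]
        rcases abs_cases x with ⟨h5, _⟩ | ⟨h5, _⟩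
        · left; rw [h4, h5]
        · right; rw [h4, h5]; ring
      simpa using this
    refine measure_mono_null hset ?_
    have habs : stdGaussian ≪ volume := by
      rw [stdGaussian]; exact gaussianReal_absolutelyContinuous 0 one_ne_zero
    apply habs
    apply Set.Finite.measure_zero
    exact (Set.finite_singleton _).insert _
  simp only [hslice]
  simp


lemma A_nonempty {J : ℕ} (hJ : 1 ≤ J) {p : ℝ} (hp : p < 1) :
    {t : ℝ | 0 ≤ t ∧ p ≤ chiCDF J t}.Nonempty := by
  obtain ⟨n, hn⟩ := exists_chiCDF_ge hJ hp
  exact ⟨n, Nat.cast_nonneg n, hn⟩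

lemma A_bddBelow (J : ℕ) (p : ℝ) : BddBelow {t : ℝ | 0 ≤ t ∧ p ≤ chiCDF J t} :=
  ⟨0, fun _ ht => ht.1⟩

lemma xi_nonneg {J : ℕ} (hJ : 1 ≤ J) {p : ℝ} (hp : p < 1) : 0 ≤ xi J p :=
  le_csInf (A_nonempty hJ hp) fun _ ht => ht.1

lemma xi_le {J : ℕ} {p t : ℝ} (ht0 : 0 ≤ t) (h : p ≤ chiCDF J t) : xi J p ≤ t :=
  csInf_le (A_bddBelow J p) ⟨ht0, h⟩

lemma le_chiCDF_xi {J : ℕ} (hJ : 1 ≤ J) {p : ℝ} (hp : p < 1) : p ≤ chiCDF J (xi J p) := by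
  set t0 := xi J p with ht0
  set S : ℕ → Set (Fin J → ℝ) :=
    fun n => {u | ∑ j, (u j)^2 ≤ (J:ℝ) * (t0 + 1/(n+1))} with hSdef
  have hanti : Antitone S := by
    intro n m hnm u hu
    simp only [hSdef, Set.mem_setOf_eq] at hu ⊢
    have h1 : (1:ℝ)/(m+1) ≤ 1/(n+1) := by
      apply one_div_le_one_div_of_le (by positivity)
      exact_mod_cast Nat.succ_le_succ hnm
    have h2 : (0:ℝ) ≤ J := Nat.cast_nonneg J
    nlinarith
  have htend := tendsto_measure_iInter_atTop (μ := gaussianPi (Fin J))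
    (fun n => (chiSet_measurable J _).nullMeasurableSet) hanti ⟨0, measure_ne_top _ _⟩
  have hInter : (⋂ n, S n) = {u : Fin J → ℝ | ∑ j, (u j)^2 ≤ (J:ℝ) * t0} := by
    ext u
    simp only [Set.mem_iInter, hSdef, Set.mem_setOf_eq]
    constructor
    · intro h
      have htt : Tendsto (fun n : ℕ => (J:ℝ) * (t0 + 1/(n+1))) atTop (𝓝 ((J:ℝ) * t0)) := by
        have : Tendsto (fun n : ℕ => 1 / ((n : ℝ) + 1)) atTop (𝓝 0) := tendsto_one_div_add_atTop_nhds_zero_nat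
        have h2 := (tendsto_const_nhds (x := t0) (f := atTop (α := ℕ))).add this
        rw [add_zero] at h2
        exact (h2.const_mul (J:ℝ)).congr (by intro n; push_cast; ring)
      exact ge_of_tendsto htt (Eventually.of_forall h)
    · intro h n
      have h2 : (0:ℝ) ≤ J := Nat.cast_nonneg J
      have h3 : (0:ℝ) < 1/((n:ℝ)+1) := by positivity
      nlinarith
  rw [hInter] at htend
  have hev : ∀ n : ℕ, ENNReal.ofReal p ≤ gaussianPi (Fin J) (S n) := by
    intro n
    have hlt : t0 < t0 + 1/(n+1) := by
      have : (0:ℝ) < 1/((n:ℝ)+1) := by positivity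
      linarith
    obtain ⟨a, ha, halt⟩ := exists_lt_of_csInf_lt (A_nonempty hJ hp) hlt
    have : p ≤ chiCDF J (t0 + 1/(n+1)) := le_trans ha.2 (chiCDF_mono J halt.le)
    exact le_chiCDF_iff.mp this
  have : ENNReal.ofReal p
      ≤ gaussianPi (Fin J) {u : Fin J → ℝ | ∑ j, (u j)^2 ≤ (J:ℝ) * t0} :=
    ge_of_tendsto htend (Eventually.of_forall hev)
  exact le_chiCDF_iff.mpr this

lemma xi_mono {J : ℕ} {p q : ℝ} (h : p ≤ q) (hq : q < 1) (hJ : 1 ≤ J) : xi J p ≤ xi J q := by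
  apply le_csInf (A_nonempty hJ hq)
  intro t ht
  exact csInf_le (A_bddBelow J p) ⟨ht.1, le_trans h ht.2⟩

lemma xi_strictMono {J : ℕ} (hJ : 1 ≤ J) {p q : ℝ} (hp : 0 < p) (hpq : p < q) (hq : q < 1) :
    xi J p < xi J q := by
  set t := xi J q with htdef
  have hq0 : 0 < q := lt_trans hp hpq
  have hqt : q ≤ chiCDF J t := le_chiCDF_xi hJ hq
  have ht0 : 0 < t := by
    rcases lt_or_eq_of_le (xi_nonneg hJ hq) with h | h
    · exact h
    · exfalso
      have h2 : chiCDF J t = 0 := by rw [htdef, ← h]; exact chiCDF_zero hJ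
      rw [h2] at hqt
      linarith
  -- measure of the open set equals measure of the closed set
  set μ := gaussianPi (Fin J) with hμ
  have hopen_eq : μ {u : Fin J → ℝ | ∑ j, (u j)^2 < (J:ℝ)*t}
      = μ {u : Fin J → ℝ | ∑ j, (u j)^2 ≤ (J:ℝ)*t} := by
    refine le_antisymm (measure_mono fun u hu => ?_) ?_
    · exact le_of_lt (Set.mem_setOf_eq ▸ hu)
    have hsplit : {u : Fin J → ℝ | ∑ j, (u j)^2 ≤ (J:ℝ)*t}
        ⊆ {u : Fin J → ℝ | ∑ j, (u j)^2 < (J:ℝ)*t} ∪ {u : Fin J → ℝ | ∑ j, (u j)^2 = (J:ℝ)*t} := by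
      intro u hu
      simp only [Set.mem_setOf_eq] at hu
      rcases lt_or_eq_of_le hu with h | h
      · exact Or.inl h
      · exact Or.inr h
    calc μ {u : Fin J → ℝ | ∑ j, (u j)^2 ≤ (J:ℝ)*t}
        ≤ μ {u : Fin J → ℝ | ∑ j, (u j)^2 < (J:ℝ)*t}
          + μ {u : Fin J → ℝ | ∑ j, (u j)^2 = (J:ℝ)*t} :=
          le_trans (measure_mono hsplit) (measure_union_le _ _)
      _ = μ {u : Fin J → ℝ | ∑ j, (u j)^2 < (J:ℝ)*t} := by
          rw [sphere_null hJ]; simp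
  -- union of closed sublevel sets
  set S : ℕ → Set (Fin J → ℝ) :=
    fun n => {u | ∑ j, (u j)^2 ≤ (J:ℝ) * (t - 1/(n+1))} with hSdef
  have hmono : Monotone S := by
    intro n m hnm u hu
    simp only [hSdef, Set.mem_setOf_eq] at hu ⊢
    have h1 : (1:ℝ)/(m+1) ≤ 1/(n+1) := by
      apply one_div_le_one_div_of_le (by positivity)
      exact_mod_cast Nat.succ_le_succ hnm
    have h2 : (0:ℝ) ≤ J := Nat.cast_nonneg J
    nlinarith
  have hunion : (⋃ n, S n) = {u : Fin J → ℝ | ∑ j, (u j)^2 < (J:ℝ)*t} := by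
    ext u
    simp only [Set.mem_iUnion, hSdef, Set.mem_setOf_eq]
    constructor
    · rintro ⟨n, hn⟩
      have h3 : (0:ℝ) < 1/((n:ℝ)+1) := by positivity
      have hJ1 : (1:ℝ) ≤ J := by exact_mod_cast hJ
      nlinarith
    · intro h
      have hJpos : (0:ℝ) < J := by exact_mod_cast (by omega : 0 < J)
      obtain ⟨n, hn⟩ := exists_nat_one_div_lt
        (show (0:ℝ) < ((J:ℝ)*t - ∑ j, (u j)^2)/J by
          apply div_pos _ hJpos
          linarith)
      refine ⟨n, ?_⟩
      have h4 : (1:ℝ)/(n+1) * J < (J:ℝ)*t - ∑ j, (u j)^2 := by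
        have := mul_lt_mul_of_pos_right hn hJpos
        rwa [div_mul_cancel₀ _ (ne_of_gt hJpos)] at this
      nlinarith [h4]
  have htend := tendsto_measure_iUnion_atTop (μ := μ) hmono
  rw [hunion, hopen_eq] at htend
  have hgoal : ENNReal.ofReal p < μ {u : Fin J → ℝ | ∑ j, (u j)^2 ≤ (J:ℝ)*t} := by
    calc ENNReal.ofReal p < ENNReal.ofReal q := by
          exact (ENNReal.ofReal_lt_ofReal_iff hq0).mpr hpq
      _ ≤ _ := le_chiCDF_iff.mp hqt
  have hev : ∀ᶠ n : ℕ in atTop, ENNReal.ofReal p < μ (S n) :=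
    htend.eventually (eventually_gt_nhds hgoal)
  obtain ⟨n, hn⟩ := hev.exists
  have hchip : p ≤ chiCDF J (t - 1/(n+1)) := le_chiCDF_iff.mpr hn.le
  have hs : p ≤ chiCDF J (max (t - 1/(n+1)) 0) :=
    le_trans hchip (chiCDF_mono J (le_max_left _ _))
  have hxile : xi J p ≤ max (t - 1/(n+1)) 0 := xi_le (le_max_right _ _) hs
  have hlt : max (t - 1/(n+1)) 0 < t := by
    apply max_lt _ ht0
    have : (0:ℝ) < 1/((n:ℝ)+1) := by positivity
    linarith
  exact lt_of_le_of_lt hxile hlt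

lemma xi_lower_bound {J : ℕ} (hJ : 1 ≤ J) :
    ∃ cl : ℝ, 0 < cl ∧ ∀ p : ℝ, 0 < p → p < 1 → cl * p ^ ((2:ℝ)/J) ≤ xi J p := by
  set K := (Real.sqrt (2*π))⁻¹ with hK
  have hKpos : 0 < K := by rw [hK]; positivity
  set B := 2 * Real.sqrt J * K with hB
  have hBpos : 0 < B := by
    rw [hB]
    have : (0:ℝ) < Real.sqrt J := Real.sqrt_pos.mpr (by exact_mod_cast (by omega : 0 < J))
    positivity
  have hBJ : (0:ℝ) < B^J := by positivity
  refine ⟨((B^J) ^ ((2:ℝ)/J))⁻¹, by positivity, ?_⟩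
  intro p hp0 hp1
  have key : ∀ a ∈ {t : ℝ | 0 ≤ t ∧ p ≤ chiCDF J t},
      ((B^J) ^ ((2:ℝ)/J))⁻¹ * p ^ ((2:ℝ)/J) ≤ a := by
    rintro a ⟨ha0, hap⟩
    have h1 : p ≤ (2 * Real.sqrt ((J:ℝ) * a) * K)^J := le_trans hap (chiCDF_upper J ha0)
    have h2 : 2 * Real.sqrt ((J:ℝ) * a) * K = B * Real.sqrt a := by
      rw [hB, Real.sqrt_mul (Nat.cast_nonneg J)]
      ring
    rw [h2, mul_pow] at h1
    set x := Real.sqrt a with hx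
    have hx0 : 0 ≤ x := Real.sqrt_nonneg a
    have h3 : p / B^J ≤ x^J := (div_le_iff₀' hBJ).mpr h1
    have hd0 : 0 ≤ p / B^J := by positivity
    have h4 : (p / B^J) ^ ((1:ℝ)/J) ≤ (x^J) ^ ((1:ℝ)/J) :=
      Real.rpow_le_rpow hd0 h3 (by positivity)
    have h5 : (x^J) ^ ((1:ℝ)/J) = x := by
      rw [← Real.rpow_natCast x J, ← Real.rpow_mul hx0]
      rw [show (J:ℝ) * (1/J) = 1 by field_simp]
      exact Real.rpow_one x
    rw [h5] at h4
    have h6 : ((p / B^J) ^ ((1:ℝ)/J))^2 ≤ x^2 :=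
      pow_le_pow_left₀ (by positivity) h4 2
    have h7 : x^2 = a := Real.sq_sqrt ha0
    have h8 : ((p / B^J) ^ ((1:ℝ)/J))^2 = (p / B^J) ^ ((2:ℝ)/J) := by
      rw [← Real.rpow_natCast ((p / B^J) ^ ((1:ℝ)/J)) 2, ← Real.rpow_mul hd0]
      norm_num
      rw [inv_mul_eq_div]
    rw [h7, h8] at h6
    refine le_trans (le_of_eq ?_) h6
    rw [Real.div_rpow hp0.le hBJ.le, div_eq_inv_mul]
    rw [inv_mul_eq_div, div_eq_inv_mul]
  exact le_csInf (A_nonempty hJ hp1) key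

lemma xi_upper_bound {J : ℕ} (hJ : 1 ≤ J) :
    ∃ cu p₁ : ℝ, 0 < cu ∧ 0 < p₁ ∧ p₁ < 1 ∧
      ∀ p : ℝ, 0 < p → p ≤ p₁ → xi J p ≤ cu * p ^ ((2:ℝ)/J) := by
  set K := (Real.sqrt (2*π))⁻¹ with hK
  have hKpos : 0 < K := by rw [hK]; positivity
  set E := (2 * K * Real.exp (-(1:ℝ)/2))^J with hE
  have hEpos : 0 < E := by positivity
  refine ⟨(E ^ ((2:ℝ)/J))⁻¹, min E (1/2), by positivity, by positivity,
    lt_of_le_of_lt (min_le_right _ _) (by norm_num), ?_⟩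
  intro p hp0 hp1
  have hpE : p ≤ E := le_trans hp1 (min_le_left _ _)
  set t := (p / E) ^ ((2:ℝ)/J) with ht
  have hpE0 : 0 ≤ p / E := by positivity
  have ht0 : 0 ≤ t := Real.rpow_nonneg hpE0 _
  have ht1 : t ≤ 1 := Real.rpow_le_one hpE0 ((div_le_one hEpos).mpr hpE) (by positivity)
  have hsq : Real.sqrt t = (p / E) ^ ((1:ℝ)/J) := by
    rw [ht, Real.sqrt_eq_rpow, ← Real.rpow_mul hpE0]
    norm_num
  have hsqJ : (Real.sqrt t)^J = p / E := by
    rw [hsq, ← Real.rpow_natCast ((p / E) ^ ((1:ℝ)/J)) J, ← Real.rpow_mul hpE0]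
    rw [show (1:ℝ)/J * J = 1 by field_simp]
    exact Real.rpow_one _
  have hlow := chiCDF_lower J ht0
  have hcomp : E * (p / E) ≤ (2 * Real.sqrt t * K * Real.exp (-t/2))^J := by
    have hee : Real.exp (-(1:ℝ)/2) ≤ Real.exp (-t/2) := by
      apply Real.exp_le_exp.mpr
      linarith
    calc E * (p / E) = (2 * K * Real.exp (-(1:ℝ)/2))^J * (Real.sqrt t)^J := by
          rw [hsqJ, hE]
      _ = (2 * K * Real.exp (-(1:ℝ)/2) * Real.sqrt t)^J := by rw [← mul_pow]
      _ ≤ (2 * Real.sqrt t * K * Real.exp (-t/2))^J := by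
          apply pow_le_pow_left₀ (by positivity)
          nlinarith [mul_le_mul_of_nonneg_right hee (Real.sqrt_nonneg t)]
    
  have hp_le : p ≤ chiCDF J t := by
    have : E * (p / E) = p := by field_simp
    rw [← this]
    exact le_trans hcomp hlow
  have := xi_le ht0 hp_le
  refine le_trans this (le_of_eq ?_)
  rw [ht, Real.div_rpow hp0.le hEpos.le, div_eq_inv_mul]

lemma xi_tendsto_atTop {J : ℕ} (hJ : 1 ≤ J) {l : Filter ℝ} {f : ℝ → ℝ}
    (hf1 : Tendsto f l (𝓝 1)) (hf2 : ∀ᶠ x in l, f x < 1) :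
    Tendsto (fun x => xi J (f x)) l atTop := by
  rw [tendsto_atTop]
  intro M
  set t0 := max M 0 with ht0
  have hq : chiCDF J t0 < 1 := chiCDF_lt_one hJ t0
  have hev : ∀ᶠ x in l, chiCDF J t0 < f x := hf1.eventually (eventually_gt_nhds hq)
  filter_upwards [hev, hf2] with x hx1 hx2
  refine le_trans (le_max_left M 0) ?_
  apply le_csInf (A_nonempty hJ hx2)
  rintro a ⟨ha0, hap⟩
  by_contra hcon
  push_neg at hcon
  have : chiCDF J a ≤ chiCDF J t0 := chiCDF_mono J hcon.le
  linarith


set_option maxHeartbeats 1000000 in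
/-- **Monotonicity and limiting behavior of the thresholding noise level.**
`σ_J²(α)` is finite and strictly positive on the relevant range, tends to `0` as
`α → 0⁺`, and for small `α`, `ξ_J(α) = Θ(α^{2/J})` while `ξ_J(1 − ακ/(1−κ)) → ∞`, so
that `σ_J²(α) = Θ(α^{2/J}/ξ_J(1 − ακ/(1−κ))) → 0`. -/
theorem thresholding_noise_level_behavior
    (κ : ℝ) (J : ℕ) (hκ : κ ∈ Set.Ioo 0 (1/2)) (hJ : 1 ≤ J) :
    (∀ α ∈ Set.Ioo (0:ℝ) 1, α < 1 - α * κ / (1 - κ) →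
      0 < xi J (1 - α * κ / (1 - κ)) - xi J α ∧ 0 < sigmaSqCrit J κ α) ∧
    Tendsto (fun α : ℝ => sigmaSqCrit J κ α) (𝓝[>] 0) (𝓝 0) ∧
    Tendsto (fun α : ℝ => xi J (1 - α * κ / (1 - κ))) (𝓝[>] 0) atTop ∧
    ∃ c C : ℝ, 0 < c ∧ c ≤ C ∧ ∀ᶠ α in 𝓝[>] (0:ℝ),
      (c * α ^ ((2:ℝ) / J) ≤ xi J α ∧ xi J α ≤ C * α ^ ((2:ℝ) / J)) ∧
      (c * (α ^ ((2:ℝ) / J) / xi J (1 - α * κ / (1 - κ))) ≤ sigmaSqCrit J κ α ∧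
        sigmaSqCrit J κ α ≤ C * (α ^ ((2:ℝ) / J) / xi J (1 - α * κ / (1 - κ)))) := by
  obtain ⟨hκ0, hκ2⟩ := hκ
  have h1κ : 0 < 1 - κ := by linarith
  obtain ⟨cl, hcl, hlow⟩ := xi_lower_bound (J := J) hJ
  obtain ⟨cu, p₁, hcu, hp₁0, hp₁1, hup⟩ := xi_upper_bound (J := J) hJ
  have hJR : (0:ℝ) < J := by exact_mod_cast (by omega : 0 < J)
  have hexp : (0:ℝ) < 2 / J := div_pos two_pos hJR
  -- β basics
  have hβlt1 : ∀ α : ℝ, 0 < α → 1 - α * κ / (1 - κ) < 1 := by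
    intro α hα
    have : 0 < α * κ / (1 - κ) := by positivity
    linarith
  have hαβ : ∀ α : ℝ, 0 < α → α < 1/2 → α < 1 - α * κ / (1 - κ) := by
    intro α hα hα2
    have h2 : α * κ / (1 - κ) ≤ α := by
      rw [div_le_iff₀ h1κ]
      nlinarith
    linarith
  -- Part A
  have partA : ∀ α ∈ Set.Ioo (0:ℝ) 1, α < 1 - α * κ / (1 - κ) →
      0 < xi J (1 - α * κ / (1 - κ)) - xi J α ∧ 0 < sigmaSqCrit J κ α := by
    rintro α ⟨hα0, hα1⟩ hlt
    have hβ1 : 1 - α * κ / (1 - κ) < 1 := hβlt1 α hα0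
    have hstrict : xi J α < xi J (1 - α * κ / (1 - κ)) := xi_strictMono hJ hα0 hlt hβ1
    have hxiα : 0 < xi J α := by
      have := hlow α hα0 hα1
      have hpow : 0 < α ^ ((2:ℝ)/J) := Real.rpow_pos_of_pos hα0 _
      nlinarith
    exact ⟨by linarith, div_pos hxiα (by linarith)⟩
  -- Part C : xi at β tends to infinity
  have hfc : Tendsto (fun α : ℝ => 1 - α * κ / (1 - κ)) (𝓝[>] (0:ℝ)) (𝓝 1) := by
    have hcont : Continuous fun α : ℝ => 1 - α * κ / (1 - κ) := by fun_prop
    have h := (hcont.tendsto 0).mono_left (nhdsWithin_le_nhds (s := Set.Ioi (0:ℝ)))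
    simpa using h
  have hflt : ∀ᶠ α in 𝓝[>] (0:ℝ), 1 - α * κ / (1 - κ) < 1 := by
    filter_upwards [self_mem_nhdsWithin] with α hα
    exact hβlt1 α hα
  have partC : Tendsto (fun α : ℝ => xi J (1 - α * κ / (1 - κ))) (𝓝[>] 0) atTop :=
    xi_tendsto_atTop hJ hfc hflt
  -- rpow tendsto
  have htpow : Tendsto (fun α : ℝ => α ^ ((2:ℝ)/J)) (𝓝[>] (0:ℝ)) (𝓝 0) := by
    have hcont : ContinuousAt (fun x : ℝ => x ^ ((2:ℝ)/J)) 0 :=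
      Real.continuousAt_rpow_const 0 _ (Or.inr hexp.le)
    have h := hcont.tendsto.mono_left (nhdsWithin_le_nhds (s := Set.Ioi (0:ℝ)))
    rwa [Real.zero_rpow (ne_of_gt hexp)] at h
  -- eventual facts
  have ev1 : ∀ᶠ α in 𝓝[>] (0:ℝ), 0 < α := self_mem_nhdsWithin
  have ev2 : ∀ᶠ α in 𝓝[>] (0:ℝ), α < min p₁ (1/2) := by
    have : ∀ᶠ α in 𝓝 (0:ℝ), α < min p₁ (1/2) :=
      eventually_lt_nhds (by positivity)
    exact this.filter_mono nhdsWithin_le_nhds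
  have ev3 : ∀ᶠ α in 𝓝[>] (0:ℝ), 1 ≤ xi J (1 - α * κ / (1 - κ)) :=
    partC.eventually_ge_atTop 1
  have ev4 : ∀ᶠ α in 𝓝[>] (0:ℝ), cu * α ^ ((2:ℝ)/J) ≤ 1/2 := by
    have h := htpow.const_mul cu
    rw [mul_zero] at h
    exact h.eventually (eventually_le_nhds (by norm_num))
  -- main eventual bound
  set c := min cl cu with hc
  set C := 2 * max cl cu with hC
  have hc0 : 0 < c := lt_min hcl hcu
  have hcC : c ≤ C := by
    have h1 : c ≤ max cl cu := le_trans (min_le_left _ _) (le_max_left _ _)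
    have h2 : 0 < max cl cu := lt_of_lt_of_le hcl (le_max_left _ _)
    nlinarith
  have hmain : ∀ᶠ α in 𝓝[>] (0:ℝ),
      (c * α ^ ((2:ℝ) / J) ≤ xi J α ∧ xi J α ≤ C * α ^ ((2:ℝ) / J)) ∧
      (c * (α ^ ((2:ℝ) / J) / xi J (1 - α * κ / (1 - κ))) ≤ sigmaSqCrit J κ α ∧
        sigmaSqCrit J κ α ≤ C * (α ^ ((2:ℝ) / J) / xi J (1 - α * κ / (1 - κ)))) := by
    filter_upwards [ev1, ev2, ev3, ev4] with α hα0 hα2 hβge1 hcu12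
    have hαp₁ : α ≤ p₁ := le_of_lt (lt_of_lt_of_le hα2 (min_le_left _ _))
    have hα12 : α < 1/2 := lt_of_lt_of_le hα2 (min_le_right _ _)
    have hα1 : α < 1 := by linarith
    have hpow0 : 0 < α ^ ((2:ℝ)/J) := Real.rpow_pos_of_pos hα0 _
    have hxl : cl * α ^ ((2:ℝ)/J) ≤ xi J α := hlow α hα0 hα1
    have hxu : xi J α ≤ cu * α ^ ((2:ℝ)/J) := hup α hα0 hαp₁
    set xb := xi J (1 - α * κ / (1 - κ)) with hxb
    have hxb0 : 0 < xb := by linarith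
    have hxiα0 : 0 < xi J α := by nlinarith
    have hhalf : xi J α ≤ xb / 2 := by linarith [le_trans hxu hcu12]
    have hd0 : 0 < xb - xi J α := by linarith
    have hdle : xb - xi J α ≤ xb := by linarith
    have hsig : sigmaSqCrit J κ α = xi J α / (xb - xi J α) := rfl
    constructor
    · constructor
      · calc c * α ^ ((2:ℝ)/J) ≤ cl * α ^ ((2:ℝ)/J) := by
              apply mul_le_mul_of_nonneg_right (min_le_left _ _) hpow0.le
          _ ≤ xi J α := hxl
      · calc xi J α ≤ cu * α ^ ((2:ℝ)/J) := hxu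
          _ ≤ C * α ^ ((2:ℝ)/J) := by
              apply mul_le_mul_of_nonneg_right _ hpow0.le
              rw [hC]
              nlinarith [le_max_right cl cu, lt_of_lt_of_le hcl (le_max_left cl cu)]
    · constructor
      · rw [hsig]
        calc c * (α ^ ((2:ℝ)/J) / xb) ≤ cl * α ^ ((2:ℝ)/J) / xb := by
              rw [mul_div_assoc]
              gcongr
              exact min_le_left _ _
          _ ≤ xi J α / xb := by gcongr
          _ ≤ xi J α / (xb - xi J α) := by gcongr
      · rw [hsig]
        calc xi J α / (xb - xi J α) ≤ xi J α / (xb / 2) := by gcongr; linarith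
          _ = 2 * xi J α / xb := by field_simp
          _ ≤ 2 * (cu * α ^ ((2:ℝ)/J)) / xb := by gcongr
          _ ≤ C * (α ^ ((2:ℝ)/J) / xb) := by
              have heq : 2 * (cu * α ^ ((2:ℝ)/J)) / xb = 2 * cu * (α ^ ((2:ℝ)/J) / xb) := by
                ring
              rw [heq, hC]
              apply mul_le_mul_of_nonneg_right _ (by positivity)
              nlinarith [le_max_right cl cu]
  -- Part B
  have partB : Tendsto (fun α : ℝ => sigmaSqCrit J κ α) (𝓝[>] 0) (𝓝 0) := by
    have hub : ∀ᶠ α in 𝓝[>] (0:ℝ),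
        sigmaSqCrit J κ α ≤ C * α ^ ((2:ℝ)/J) := by
      filter_upwards [hmain, ev3, ev1] with α hm hβge1 hα0
      have hpow0 : 0 < α ^ ((2:ℝ)/J) := Real.rpow_pos_of_pos hα0 _
      refine le_trans hm.2.2 ?_
      have : α ^ ((2:ℝ)/J) / xi J (1 - α * κ / (1 - κ)) ≤ α ^ ((2:ℝ)/J) := by
        apply div_le_self hpow0.le hβge1
      have hC0 : 0 ≤ C := le_trans hc0.le hcC
      nlinarith
    have hlb : ∀ᶠ α in 𝓝[>] (0:ℝ), 0 ≤ sigmaSqCrit J κ α := by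
      filter_upwards [hmain, ev3, ev1] with α hm hβge1 hα0
      have hpow0 : 0 < α ^ ((2:ℝ)/J) := Real.rpow_pos_of_pos hα0 _
      refine le_trans ?_ hm.2.1
      have hxb0 : (0:ℝ) < xi J (1 - α * κ / (1 - κ)) := by linarith
      positivity
    have htC : Tendsto (fun α : ℝ => C * α ^ ((2:ℝ)/J)) (𝓝[>] (0:ℝ)) (𝓝 0) := by
      have h := htpow.const_mul C
      rwa [mul_zero] at h
    exact squeeze_zero' hlb hub htC
  exact ⟨partA, partB, partC, c, C, hc0, hcC, hmain⟩


end Sparsity
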